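/- Let X be a set, let F be a nonempty countable class of functions f : X → [0,1] measurable with respect to a σ-algebra on X, let m ≥ 1, let X₁, …, X_m be i.i.d. X-valued random variables, and let σ₁, …, σ_m be i.i.d. random signs uniform on {−1, +1}, independent of the sample. Then E[ sup_{f∈F} (1/m)·Σ_{j=1}^m σ_j · f(X_j) ] ≤ inf_{α>0} ( α + √( 2·ln N(α, F, m) / m ) ). -/

import Mathlib

open MeasureTheory ProbabilityTheory

open scoped ENNReal


section helpers

variable {Ω : Type*} [MeasurableSpace Ω] (μ : Measure Ω) [IsProbabilityMeasure μ]

lemma sign_integral (s : Ω → ℝ) (hs : Measurable s)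
    (hval : ∀ x, s x = 1 ∨ s x = -1) (hu : μ {x | s x = 1} = 1 / 2) (h : ℝ → ℝ) :
    ∫ ω, h (s ω) ∂μ = (h 1 + h (-1)) / 2 := by
  have hA : MeasurableSet {x | s x = 1} := hs (measurableSet_singleton 1)
  have hfun : (fun ω => h (s ω)) =
      fun ω => Set.indicator {x | s x = 1} (fun _ => h 1 - h (-1)) ω + h (-1) := by
    funext ω
    rcases hval ω with hv | hv
    · simp [Set.indicator_of_mem, hv, Set.mem_setOf_eq]
    · have : ω ∉ {x | s x = 1} := by simp [Set.mem_setOf_eq, hv]; norm_num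
      simp only [Set.indicator_of_notMem this, hv, zero_add]
  rw [hfun, integral_add ((integrable_const _).indicator hA) (integrable_const _),
    integral_indicator_const _ hA, integral_const, measureReal_def, hu]
  simp only [probReal_univ, ENNReal.toReal_one, smul_eq_mul, one_smul]
  have : ((1 : ℝ≥0∞) / 2).toReal = (1 : ℝ) / 2 := by
    simp [ENNReal.toReal_div]
  rw [this]; ring

lemma sign_mgf (s : Ω → ℝ) (hs : Measurable s)
    (hval : ∀ x, s x = 1 ∨ s x = -1) (hu : μ {x | s x = 1} = 1 / 2) (c : ℝ) :
    ∫ ω, Real.exp (c * s ω) ∂μ ≤ Real.exp (c ^ 2 / 2) := by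
  rw [sign_integral μ s hs hval hu (fun u => Real.exp (c * u))]
  have : (Real.exp (c * 1) + Real.exp (c * (-1))) / 2 = Real.cosh c := by
    rw [Real.cosh_eq]; ring_nf
  rw [this]
  exact Real.cosh_le_exp_half_sq c

lemma indep_prod_integral {ι : Type*} (f : ι → Ω → ℝ)
    (hindep : iIndepFun f μ)
    (hmeas : ∀ i, Measurable (f i)) (hpos : ∀ i ω, 0 ≤ f i ω) (s : Finset ι) :
    ∫ ω, ∏ i ∈ s, f i ω ∂μ = ∏ i ∈ s, ∫ ω, f i ω ∂μ := by
  classical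
  induction s using Finset.induction with
  | empty => simp
  | insert i s hi ih =>
    have hind : IndepFun (∏ j ∈ s, f j) (f i) μ :=
      hindep.indepFun_finsetProd_of_notMem hmeas hi
    have hprodeq : (∏ j ∈ s, f j) = fun ω => ∏ j ∈ s, f j ω := by
      funext ω; simp [Finset.prod_apply]
    have hmeasprod : Measurable (∏ j ∈ s, f j) := by
      rw [hprodeq]; exact Finset.measurable_prod s (fun j _ => hmeas j)
    have := hind.symm.integral_mul_eq_mul_integral
      (hmeas i).aestronglyMeasurable hmeasprod.aestronglyMeasurable
    simp only [Finset.prod_insert hi, ← ih]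
    have h1 : (fun ω => f i ω * ∏ j ∈ s, f j ω) = f i * ∏ j ∈ s, f j := by
      funext ω; simp [Finset.prod_apply]
    calc ∫ ω, f i ω * ∏ j ∈ s, f j ω ∂μ
        = ∫ ω, (f i * ∏ j ∈ s, f j) ω ∂μ := by rw [h1]
      _ = (∫ ω, f i ω ∂μ) * ∫ ω, (∏ j ∈ s, f j) ω ∂μ := this
      _ = (∫ ω, f i ω ∂μ) * ∫ ω, ∏ j ∈ s, f j ω ∂μ := by rw [hprodeq]

lemma measurable_finset_sup' {ι : Type*} (G : Finset ι) (hGne : G.Nonempty)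
    (Z : ι → Ω → ℝ) (hZ : ∀ i, Measurable (Z i)) :
    Measurable fun ω => G.sup' hGne fun i => Z i ω := by
  have heq : (fun ω => G.sup' hGne fun i => Z i ω) = fun ω => ⨆ i : G, Z i ω := by
    funext ω
    rw [Finset.sup'_eq_csSup_image, Set.image_eq_range, iSup]
    rfl
  rw [heq]
  exact Measurable.iSup fun i => hZ i

end helpers


section massart

variable {Ω : Type*} [MeasurableSpace Ω] (μ : Measure Ω) [IsProbabilityMeasure μ]

lemma massart_bound {ι : Type*} (G : Finset ι) (hGne : G.Nonempty)
    (Z : ι → Ω → ℝ) (hZm : ∀ i, Measurable (Z i)) (R : ℝ)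
    (hZb : ∀ i ∈ G, ∀ ω, |Z i ω| ≤ R) (t : ℝ) (ht : 0 < t) :
    ∫ ω, G.sup' hGne (fun i => Z i ω) ∂μ
      ≤ Real.log (∑ i ∈ G, ∫ ω, Real.exp (t * Z i ω) ∂μ) / t := by
  have hexpm : ∀ i, Measurable fun ω => Real.exp (t * Z i ω) :=
    fun i => Real.measurable_exp.comp ((hZm i).const_mul t)
  have hint : ∀ i ∈ G, Integrable (fun ω => Real.exp (t * Z i ω)) μ := by
    intro i hi
    refine (integrable_const (Real.exp (t * R))).mono' (hexpm i).aestronglyMeasurable ?_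
    filter_upwards with ω
    rw [Real.norm_eq_abs, abs_of_pos (Real.exp_pos _)]
    exact Real.exp_le_exp.2 (mul_le_mul_of_nonneg_left ((abs_le.1 (hZb i hi ω)).2) ht.le)
  have hIpos : ∀ i ∈ G, 0 < ∫ ω, Real.exp (t * Z i ω) ∂μ := by
    intro i hi
    have : ∫ (_ : Ω), Real.exp (-(t * R)) ∂μ ≤ ∫ ω, Real.exp (t * Z i ω) ∂μ := by
      refine integral_mono (integrable_const _) (hint i hi) fun ω => ?_
      exact Real.exp_le_exp.2 (by nlinarith [(abs_le.1 (hZb i hi ω)).1])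
    have h2 : (0:ℝ) < ∫ (_ : Ω), Real.exp (-(t * R)) ∂μ := by
      simp [integral_const, Real.exp_pos]
    linarith
  set M := ∑ i ∈ G, ∫ ω, Real.exp (t * Z i ω) ∂μ with hMdef
  have hM : 0 < M := Finset.sum_pos hIpos hGne
  -- pointwise bound
  have hpt : ∀ ω, t * G.sup' hGne (fun i => Z i ω)
      ≤ Real.log M + (∑ i ∈ G, Real.exp (t * Z i ω)) / M - 1 := by
    intro ω
    obtain ⟨i₀, hi₀, hsup⟩ := Finset.exists_mem_eq_sup' hGne (fun i => Z i ω)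
    set W := ∑ i ∈ G, Real.exp (t * Z i ω) with hWdef
    have hW : 0 < W := Finset.sum_pos (fun i _ => Real.exp_pos _) hGne
    have h1 : t * G.sup' hGne (fun i => Z i ω) ≤ Real.log W := by
      rw [hsup]
      calc t * Z i₀ ω = Real.log (Real.exp (t * Z i₀ ω)) := (Real.log_exp _).symm
        _ ≤ Real.log W := Real.log_le_log (Real.exp_pos _)
            (Finset.single_le_sum (fun i _ => (Real.exp_pos (t * Z i ω)).le) hi₀)
    have h2 : Real.log W ≤ Real.log M + (W / M - 1) := by
      have := Real.log_le_sub_one_of_pos (div_pos hW hM)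
      rw [Real.log_div hW.ne' hM.ne'] at this
      linarith
    linarith
  -- integrate
  have hsupmeas : Measurable fun ω => G.sup' hGne fun i => Z i ω :=
    measurable_finset_sup' G hGne Z hZm
  have hsupint : Integrable (fun ω => G.sup' hGne fun i => Z i ω) μ := by
    refine (integrable_const R).mono' hsupmeas.aestronglyMeasurable ?_
    filter_upwards with ω
    rw [Real.norm_eq_abs, abs_le]
    obtain ⟨i₀, hi₀, hsup⟩ := Finset.exists_mem_eq_sup' hGne (fun i => Z i ω)
    constructor
    · rw [hsup]; exact (abs_le.1 (hZb i₀ hi₀ ω)).1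
    · exact Finset.sup'_le _ _ fun i hi => (abs_le.1 (hZb i hi ω)).2
  have hrhsint : Integrable
      (fun ω => Real.log M + (∑ i ∈ G, Real.exp (t * Z i ω)) / M - 1) μ := by
    apply Integrable.sub _ (integrable_const 1)
    exact (integrable_const (Real.log M)).add
      ((integrable_finset_sum G hint).div_const M)
  have hmono : t * ∫ ω, G.sup' hGne (fun i => Z i ω) ∂μ ≤ Real.log M := by
    have h1 : ∫ ω, t * G.sup' hGne (fun i => Z i ω) ∂μ
        ≤ ∫ ω, (Real.log M + (∑ i ∈ G, Real.exp (t * Z i ω)) / M - 1) ∂μ :=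
      integral_mono (hsupint.const_mul t) hrhsint hpt
    rw [integral_const_mul] at h1
    have h2 : ∫ ω, (Real.log M + (∑ i ∈ G, Real.exp (t * Z i ω)) / M - 1) ∂μ
        = Real.log M := by
      have hfe : (fun ω => Real.log M + (∑ i ∈ G, Real.exp (t * Z i ω)) / M - 1)
          = fun ω => (Real.log M - 1) + (∑ i ∈ G, Real.exp (t * Z i ω)) / M := by
        funext ω; ring
      rw [hfe, integral_add (integrable_const _) ((integrable_finset_sum G hint).div_const M),
          integral_div, integral_finset_sum G hint, ← hMdef, div_self hM.ne', integral_const]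
      simp
    linarith [h2 ▸ h1]
  rw [le_div_iff₀ ht, mul_comm]
  exact hmono
end massart




lemma rademacher_finset {Ω₂ : Type*} [MeasurableSpace Ω₂] (μ₂ : Measure Ω₂)
    [IsProbabilityMeasure μ₂]
    (m : ℕ) (hm : 0 < m) (σ : Fin m → Ω₂ → ℝ) (hσm : ∀ j, Measurable (σ j))
    (hσi : iIndepFun σ μ₂)
    (hσval : ∀ j x, σ j x = 1 ∨ σ j x = -1)
    (hσunif : ∀ j, μ₂ {x | σ j x = 1} = 1 / 2)
    {ι : Type*} (G : Finset ι) (hGne : G.Nonempty) (a : ι → Fin m → ℝ)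
    (ha : ∀ i ∈ G, ∀ j, |a i j| ≤ 1) (n : ℕ) (hn : G.card ≤ n) (hn1 : 1 ≤ n) :
    ∫ ω, G.sup' hGne (fun i => ∑ j, σ j ω * a i j) ∂μ₂
      ≤ Real.sqrt (2 * m * Real.log n) := by
  have hmR : (0:ℝ) < m := by exact_mod_cast hm
  set Z : ι → Ω₂ → ℝ := fun i ω => ∑ j, σ j ω * a i j with hZdef
  have hZm : ∀ i, Measurable (Z i) := fun i =>
    Finset.measurable_sum _ fun j _ => (hσm j).mul_const _
  have hσabs : ∀ j ω, |σ j ω| = 1 := by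
    intro j ω; rcases hσval j ω with h | h <;> simp [h]
  have hZb : ∀ i ∈ G, ∀ ω, |Z i ω| ≤ (m:ℝ) := by
    intro i hi ω
    calc |Z i ω| ≤ ∑ j, |σ j ω * a i j| := Finset.abs_sum_le_sum_abs _ _
      _ ≤ ∑ _j : Fin m, (1:ℝ) := Finset.sum_le_sum fun j _ => by
          rw [abs_mul, hσabs, one_mul]; exact ha i hi j
      _ = m := by simp
  have hexpm : ∀ (t:ℝ) i, Measurable fun ω => Real.exp (t * Z i ω) :=
    fun t i => Real.measurable_exp.comp ((hZm i).const_mul t)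
  have hint : ∀ (t : ℝ), 0 < t → ∀ i ∈ G, Integrable (fun ω => Real.exp (t * Z i ω)) μ₂ := by
    intro t ht i hi
    refine (integrable_const (Real.exp (t * m))).mono' (hexpm t i).aestronglyMeasurable ?_
    filter_upwards with ω
    rw [Real.norm_eq_abs, abs_of_pos (Real.exp_pos _)]
    exact Real.exp_le_exp.2 (mul_le_mul_of_nonneg_left ((abs_le.1 (hZb i hi ω)).2) ht.le)
  have hmgf : ∀ (t : ℝ), ∀ i ∈ G, ∫ ω, Real.exp (t * Z i ω) ∂μ₂
      ≤ Real.exp (t ^ 2 * m / 2) := by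
    intro t i hi
    have hprod : (fun ω => Real.exp (t * Z i ω))
        = fun ω => ∏ j, Real.exp (t * a i j * σ j ω) := by
      funext ω
      rw [← Real.exp_sum]
      congr 1
      rw [hZdef, Finset.mul_sum]
      exact Finset.sum_congr rfl fun j _ => by ring
    have hindep : iIndepFun
        (fun j => fun ω => Real.exp (t * a i j * σ j ω)) μ₂ :=
      hσi.comp (fun j u => Real.exp (t * a i j * u))
        (fun j => Real.measurable_exp.comp (measurable_const_mul _))
    rw [hprod, indep_prod_integral μ₂ _ hindep
      (fun j => Real.measurable_exp.comp ((hσm j).const_mul _))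
      (fun j ω => (Real.exp_pos _).le) Finset.univ]
    calc ∏ j, ∫ ω, Real.exp (t * a i j * σ j ω) ∂μ₂
        ≤ ∏ _j : Fin m, Real.exp (t ^ 2 / 2) := by
          refine Finset.prod_le_prod (fun j _ => integral_nonneg fun ω => (Real.exp_pos _).le)
            (fun j _ => ?_)
          refine (sign_mgf μ₂ (σ j) (hσm j) (hσval j) (hσunif j) (t * a i j)).trans ?_
          refine Real.exp_le_exp.2 ?_
          have h1 : |a i j| ≤ 1 := ha i hi j
          have ha2 : (a i j) ^ 2 ≤ 1 := by nlinarith [sq_abs (a i j), abs_nonneg (a i j)]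
          have hmp : (t * a i j) ^ 2 = t ^ 2 * (a i j) ^ 2 := by ring
          nlinarith [sq_nonneg t]
      _ = Real.exp (t ^ 2 * m / 2) := by
          rw [Finset.prod_const, ← Real.exp_nat_mul]
          congr 1
          push_cast [Finset.card_univ, Fintype.card_fin]
          ring
  have key : ∀ t : ℝ, 0 < t →
      ∫ ω, G.sup' hGne (fun i => Z i ω) ∂μ₂ ≤ Real.log n / t + t * m / 2 := by
    intro t ht
    have h1 := massart_bound μ₂ G hGne Z hZm m hZb t ht
    have hMpos : 0 < ∑ i ∈ G, ∫ ω, Real.exp (t * Z i ω) ∂μ₂ :=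
      Finset.sum_pos (fun i hi => integral_exp_pos (hint t ht i hi)) hGne
    have hMle : ∑ i ∈ G, ∫ ω, Real.exp (t * Z i ω) ∂μ₂
        ≤ n * Real.exp (t ^ 2 * m / 2) := by
      calc ∑ i ∈ G, ∫ ω, Real.exp (t * Z i ω) ∂μ₂
          ≤ ∑ _i ∈ G, Real.exp (t ^ 2 * m / 2) := Finset.sum_le_sum (hmgf t)
        _ = G.card * Real.exp (t ^ 2 * m / 2) := by
            rw [Finset.sum_const, nsmul_eq_mul]
        _ ≤ n * Real.exp (t ^ 2 * m / 2) := by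
            have : (G.card : ℝ) ≤ n := by exact_mod_cast hn
            exact mul_le_mul_of_nonneg_right this (Real.exp_pos _).le
    have hlog : Real.log (∑ i ∈ G, ∫ ω, Real.exp (t * Z i ω) ∂μ₂)
        ≤ Real.log n + t ^ 2 * m / 2 := by
      calc Real.log (∑ i ∈ G, ∫ ω, Real.exp (t * Z i ω) ∂μ₂)
          ≤ Real.log (n * Real.exp (t ^ 2 * m / 2)) := Real.log_le_log hMpos hMle
        _ = Real.log n + t ^ 2 * m / 2 := by
            rw [Real.log_mul (by positivity) (Real.exp_pos _).ne', Real.log_exp]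
    calc ∫ ω, G.sup' hGne (fun i => Z i ω) ∂μ₂
        ≤ Real.log (∑ i ∈ G, ∫ ω, Real.exp (t * Z i ω) ∂μ₂) / t := h1
      _ ≤ (Real.log n + t ^ 2 * m / 2) / t := by gcongr
      _ = Real.log n / t + t * m / 2 := by field_simp
  have hlogn : 0 ≤ Real.log n := Real.log_nonneg (by exact_mod_cast hn1)
  rcases eq_or_lt_of_le hlogn with hl0 | hlpos
  · have h0 : Real.sqrt (2 * m * Real.log n) = 0 := by rw [← hl0]; simp
    rw [h0]
    refine le_of_forall_pos_le_add fun ε hε => ?_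
    have ht : (0:ℝ) < 2 * ε / m := by positivity
    have := key _ ht
    rw [← hl0] at this
    calc ∫ ω, G.sup' hGne (fun i => Z i ω) ∂μ₂ ≤ 0 / (2 * ε / m) + (2 * ε / m) * m / 2 := this
      _ = ε := by field_simp; ring
      _ ≤ 0 + ε := by linarith
  · set t := Real.sqrt (2 * Real.log n / m) with htdef
    have ht : 0 < t := Real.sqrt_pos.2 (by positivity)
    have ht2 : t ^ 2 = 2 * Real.log n / m := Real.sq_sqrt (by positivity)
    have hlt : Real.log n / t = t * m / 2 := by
      have : Real.log n = t ^ 2 * m / 2 := by rw [ht2]; field_simp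
      rw [this]
      field_simp
    have hfin : Real.log n / t + t * m / 2 = Real.sqrt (2 * m * Real.log n) := by
      rw [hlt]
      have : t * m / 2 + t * m / 2 = t * m := by ring
      rw [this]
      rw [show 2 * (m:ℝ) * Real.log n = (2 * Real.log n / m) * m ^ 2 by field_simp]
      rw [Real.sqrt_mul (by positivity), Real.sqrt_sq hmR.le]
    calc ∫ ω, G.sup' hGne (fun i => Z i ω) ∂μ₂
        ≤ Real.log n / t + t * m / 2 := key t ht
      _ = Real.sqrt (2 * m * Real.log n) := hfin





/-- **Covering number bound on the Rademacher complexity.**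
Let `F` be a nonempty countable class of measurable functions `X → [0,1]`, let
`Xs 0, …, Xs (m-1)` be i.i.d. `X`-valued random variables on `(Ω₁, μ₁)`, and let
`σ 0, …, σ (m-1)` be i.i.d. uniform random signs on `(Ω₂, μ₂)`, independent of the sample
(product measure).  If `n` is any cardinality such that every sample `S ∈ X^m` admits a set
`G` of at most `n` functions `X → [0,1]` that `α`-covers `F` in the `‖·‖_{∞,S}` norm
(i.e. `N(α, F, m) ≤ n`), then the Rademacher complexity satisfies
`E[sup_{f∈F} (1/m)·Σ_j σ j · f (Xs j)] ≤ α + √(2·ln n / m)`.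
(Quantifying over all valid `n` expresses the infimum over `α > 0` of
`α + √(2 ln N(α,F,m)/m)`, including the convention that the term is `+∞` when no finite
cover exists.) -/
theorem stmt_7 {X : Type*} [MeasurableSpace X]
    (F : Set (X → ℝ)) (hFc : F.Countable) (hFne : F.Nonempty)
    (hFm : ∀ f ∈ F, Measurable f) (hF01 : ∀ f ∈ F, ∀ x, f x ∈ Set.Icc (0 : ℝ) 1)
    (m : ℕ) (hm : 0 < m)
    {Ω₁ Ω₂ : Type*} [MeasurableSpace Ω₁] [MeasurableSpace Ω₂]
    (μ₁ : Measure Ω₁) (μ₂ : Measure Ω₂)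
    [IsProbabilityMeasure μ₁] [IsProbabilityMeasure μ₂]
    (Xs : Fin m → Ω₁ → X) (hXm : ∀ j, Measurable (Xs j))
    (hXi : iIndepFun Xs μ₁)
    (hXid : ∀ j, IdentDistrib (Xs j) (Xs ⟨0, hm⟩) μ₁ μ₁)
    (σ : Fin m → Ω₂ → ℝ) (hσm : ∀ j, Measurable (σ j))
    (hσi : iIndepFun σ μ₂)
    (hσval : ∀ j x, σ j x = 1 ∨ σ j x = -1)
    (hσunif : ∀ j, μ₂ {x | σ j x = 1} = 1 / 2)
    (α : ℝ) (hα : 0 < α) (n : ℕ)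
    (hcover : ∀ S : Fin m → X, ∃ G : Finset (X → ℝ), G.card ≤ n ∧
        (∀ g ∈ G, ∀ x, g x ∈ Set.Icc (0 : ℝ) 1) ∧
        ∀ f ∈ F, ∃ g ∈ G, ∀ j, |f (S j) - g (S j)| ≤ α) :
    (∫ ω, (⨆ f : F, (∑ j, σ j ω.2 * (f : X → ℝ) (Xs j ω.1)) / m) ∂(μ₁.prod μ₂))
      ≤ α + Real.sqrt (2 * Real.log n / m) := by
  haveI : Countable ↥F := hFc.to_subtype
  haveI : Nonempty ↥F := hFne.to_subtype
  have hmR : (0:ℝ) < m := by exact_mod_cast hm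
  obtain ⟨f₀, hf₀⟩ := hFne
  have hσabs : ∀ j ω, |σ j ω| = 1 := by
    intro j ω; rcases hσval j ω with h | h <;> simp [h]
  -- basic pointwise bound on each term
  have habs : ∀ f ∈ F, ∀ (ω₁ : Ω₁) (ω₂ : Ω₂),
      |(∑ j, σ j ω₂ * f (Xs j ω₁)) / m| ≤ 1 := by
    intro f hf ω₁ ω₂
    rw [abs_div, abs_of_pos hmR, div_le_one hmR]
    calc |∑ j, σ j ω₂ * f (Xs j ω₁)| ≤ ∑ j, |σ j ω₂ * f (Xs j ω₁)| :=
        Finset.abs_sum_le_sum_abs _ _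
      _ ≤ ∑ _j : Fin m, (1:ℝ) := Finset.sum_le_sum fun j _ => by
          rw [abs_mul, hσabs, one_mul, abs_le]
          obtain ⟨h0, h1⟩ := hF01 f hf (Xs j ω₁)
          constructor <;> linarith
      _ = m := by simp
  set H : Ω₁ × Ω₂ → ℝ :=
    fun ω => ⨆ f : F, (∑ j, σ j ω.2 * (f : X → ℝ) (Xs j ω.1)) / m with hHdef
  have hbdd : ∀ ω : Ω₁ × Ω₂,
      BddAbove (Set.range fun f : F => (∑ j, σ j ω.2 * (f : X → ℝ) (Xs j ω.1)) / m) := by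
    intro ω
    refine ⟨1, ?_⟩
    rintro x ⟨f, rfl⟩
    exact (abs_le.1 (habs f f.2 ω.1 ω.2)).2
  have hH_meas : Measurable H := by
    apply Measurable.iSup
    intro f
    exact (Finset.measurable_sum _ fun j _ =>
      ((hσm j).comp measurable_snd).mul
        ((hFm f f.2).comp ((hXm j).comp measurable_fst))).div_const _
  have hH_bound : ∀ ω, |H ω| ≤ 1 := by
    intro ω
    rw [abs_le]
    constructor
    · refine le_trans ?_ (le_ciSup (hbdd ω) ⟨f₀, hf₀⟩)
      exact (abs_le.1 (habs f₀ hf₀ ω.1 ω.2)).1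
    · exact ciSup_le fun f => (abs_le.1 (habs f f.2 ω.1 ω.2)).2
  have hH_int : Integrable H (μ₁.prod μ₂) := by
    refine (integrable_const (1:ℝ)).mono' hH_meas.aestronglyMeasurable ?_
    filter_upwards with ω
    rw [Real.norm_eq_abs]
    exact hH_bound ω
  rw [show (∫ ω, (⨆ f : F, (∑ j, σ j ω.2 * (f : X → ℝ) (Xs j ω.1)) / m) ∂(μ₁.prod μ₂))
      = ∫ ω, H ω ∂(μ₁.prod μ₂) from rfl, integral_prod _ hH_int]
  -- inner bound
  have hinner : ∀ ω₁ : Ω₁, ∫ ω₂, H (ω₁, ω₂) ∂μ₂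
      ≤ α + Real.sqrt (2 * Real.log n / m) := by
    intro ω₁
    obtain ⟨G, hGn, hG01, hGcov⟩ := hcover fun j => Xs j ω₁
    obtain ⟨g₀, hg₀, -⟩ := hGcov f₀ hf₀
    have hGne : G.Nonempty := ⟨g₀, hg₀⟩
    have hn1 : 1 ≤ n := hGne.card_pos.trans_le hGn
    set Z : (X → ℝ) → Ω₂ → ℝ := fun g ω => ∑ j, σ j ω * g (Xs j ω₁) with hZdef
    have hZm : ∀ g, Measurable (Z g) := fun g =>
      Finset.measurable_sum _ fun j _ => (hσm j).mul_const _
    have hZb : ∀ g ∈ G, ∀ ω, |Z g ω| ≤ (m:ℝ) := by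
      intro g hg ω
      calc |Z g ω| ≤ ∑ j, |σ j ω * g (Xs j ω₁)| := Finset.abs_sum_le_sum_abs _ _
        _ ≤ ∑ _j : Fin m, (1:ℝ) := Finset.sum_le_sum fun j _ => by
            rw [abs_mul, hσabs, one_mul, abs_le]
            obtain ⟨h0, h1⟩ := hG01 g hg (Xs j ω₁)
            constructor <;> linarith
        _ = m := by simp
    have hpt : ∀ ω₂, H (ω₁, ω₂) ≤ α + (G.sup' hGne fun g => Z g ω₂) / m := by
      intro ω₂
      refine ciSup_le fun f => ?_
      obtain ⟨g, hg, hfg⟩ := hGcov f f.2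
      have h1 : ∑ j, σ j ω₂ * (f : X → ℝ) (Xs j ω₁) ≤ Z g ω₂ + m * α := by
        have hsplit : ∑ j, σ j ω₂ * (f : X → ℝ) (Xs j ω₁)
            = Z g ω₂ + ∑ j, σ j ω₂ * ((f : X → ℝ) (Xs j ω₁) - g (Xs j ω₁)) := by
          rw [hZdef, ← Finset.sum_add_distrib]
          exact Finset.sum_congr rfl fun j _ => by ring
        rw [hsplit]
        have h2 : ∑ j, σ j ω₂ * ((f : X → ℝ) (Xs j ω₁) - g (Xs j ω₁))
            ≤ ∑ _j : Fin m, α := by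
          refine Finset.sum_le_sum fun j _ => ?_
          calc σ j ω₂ * ((f : X → ℝ) (Xs j ω₁) - g (Xs j ω₁))
              ≤ |σ j ω₂ * ((f : X → ℝ) (Xs j ω₁) - g (Xs j ω₁))| := le_abs_self _
            _ = |(f : X → ℝ) (Xs j ω₁) - g (Xs j ω₁)| := by rw [abs_mul, hσabs, one_mul]
            _ ≤ α := hfg j
        have h3 : ∑ _j : Fin m, α = m * α := by
          rw [Finset.sum_const, nsmul_eq_mul]; simp
        linarith [h2, h3.symm ▸ h2]
      have h4 : (∑ j, σ j ω₂ * (f : X → ℝ) (Xs j ω₁)) / m ≤ (Z g ω₂ + m * α) / m := by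
        gcongr
      calc (∑ j, σ j ω₂ * (f : X → ℝ) (Xs j ω₁)) / m ≤ (Z g ω₂ + m * α) / m := h4
        _ = α + Z g ω₂ / m := by field_simp; ring
        _ ≤ α + (G.sup' hGne fun g => Z g ω₂) / m := by
            gcongr
            exact Finset.le_sup' (fun g => Z g ω₂) hg
    -- integrability over μ₂
    have hHm2 : Measurable fun ω₂ => H (ω₁, ω₂) :=
      hH_meas.comp (measurable_const.prodMk measurable_id)
    have hH2int : Integrable (fun ω₂ => H (ω₁, ω₂)) μ₂ := by
      refine (integrable_const (1:ℝ)).mono' hHm2.aestronglyMeasurable ?_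
      filter_upwards with ω₂
      rw [Real.norm_eq_abs]
      exact hH_bound (ω₁, ω₂)
    have hsupmeas : Measurable fun ω₂ => G.sup' hGne fun g => Z g ω₂ :=
      measurable_finset_sup' G hGne Z hZm
    have hsupint : Integrable (fun ω₂ => G.sup' hGne fun g => Z g ω₂) μ₂ := by
      refine (integrable_const (m:ℝ)).mono' hsupmeas.aestronglyMeasurable ?_
      filter_upwards with ω₂
      rw [Real.norm_eq_abs, abs_le]
      constructor
      · exact le_trans (abs_le.1 (hZb g₀ hg₀ ω₂)).1 (Finset.le_sup' (fun g => Z g ω₂) hg₀)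
      · exact Finset.sup'_le _ _ fun g hg => (abs_le.1 (hZb g hg ω₂)).2
    have hstep : ∫ ω₂, H (ω₁, ω₂) ∂μ₂
        ≤ α + (∫ ω₂, G.sup' hGne (fun g => Z g ω₂) ∂μ₂) / m := by
      have hRint : Integrable (fun ω₂ => α + (G.sup' hGne fun g => Z g ω₂) / m) μ₂ :=
        (integrable_const α).add (hsupint.div_const m)
      have h5 : ∫ ω₂, H (ω₁, ω₂) ∂μ₂
          ≤ ∫ ω₂, (α + (G.sup' hGne fun g => Z g ω₂) / m) ∂μ₂ :=
        integral_mono hH2int hRint hpt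
      have h6 : ∫ ω₂, (α + (G.sup' hGne fun g => Z g ω₂) / m) ∂μ₂
          = α + (∫ ω₂, G.sup' hGne (fun g => Z g ω₂) ∂μ₂) / m := by
        rw [integral_add (integrable_const α) (hsupint.div_const m), integral_const,
          integral_div, probReal_univ, one_smul]
      linarith [h6 ▸ h5]
    have hmass : ∫ ω₂, G.sup' hGne (fun g => Z g ω₂) ∂μ₂
        ≤ Real.sqrt (2 * m * Real.log n) :=
      rademacher_finset μ₂ m hm σ hσm hσi hσval hσunif G hGne
        (fun g j => g (Xs j ω₁))
        (fun g hg j => by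
          rw [abs_le]
          obtain ⟨h0, h1⟩ := hG01 g hg (Xs j ω₁)
          constructor <;> linarith) n hGn hn1
    have hsqrt : Real.sqrt (2 * m * Real.log n) / m = Real.sqrt (2 * Real.log n / m) := by
      have hlogn : 0 ≤ Real.log n := Real.log_nonneg (by exact_mod_cast hn1)
      rw [show 2 * Real.log n / (m:ℝ) = (2 * m * Real.log n) / (m:ℝ) ^ 2 by
        field_simp]
      rw [Real.sqrt_div (by positivity : (0:ℝ) ≤ 2 * m * Real.log n),
        Real.sqrt_sq hmR.le]
    calc ∫ ω₂, H (ω₁, ω₂) ∂μ₂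
        ≤ α + (∫ ω₂, G.sup' hGne (fun g => Z g ω₂) ∂μ₂) / m := hstep
      _ ≤ α + Real.sqrt (2 * m * Real.log n) / m := by gcongr
      _ = α + Real.sqrt (2 * Real.log n / m) := by rw [hsqrt]
  calc ∫ ω₁, ∫ ω₂, H (ω₁, ω₂) ∂μ₂ ∂μ₁
      ≤ ∫ _ω₁, (α + Real.sqrt (2 * Real.log n / m)) ∂μ₁ :=
        integral_mono (hH_int.integral_prod_left) (integrable_const _) hinner
    _ = α + Real.sqrt (2 * Real.log n / m) := by
        rw [integral_const, probReal_univ, one_smul]
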